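/- For every nonnegative integer N, ∑_{m,n≥0} q^{G(m,n)} [2N - 2m - 2n + 2 choose m]_q [N - m - n + 1 + ⌊n/2⌋ choose ⌊n/2⌋]_{q^4} = ∑_{m,n≥0} q^{m²+n²} [N - m + 1 choose n]_{q^2} [n choose m]_{q^2}, where G(m,n) = (3m² + m)/2 + 2mn + n². -/

import Mathlib

open Finset

/-- Finite q-Pochhammer symbol `(a; q)_n = ∏_{j=0}^{n-1} (1 - a q^j)`. -/
noncomputable def qPoch (a q : ℂ) (n : ℕ) : ℂ := ∏ j ∈ Finset.range n, (1 - a * q ^ j)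

/-- Infinite q-Pochhammer symbol `(a; q)_∞`. -/
noncomputable def qPochInf (a q : ℂ) : ℂ := ∏' j : ℕ, (1 - a * q ^ j)

/-- Gaussian binomial coefficient `[a choose b]_q`, equal to
`(q;q)_a / ((q;q)_b (q;q)_{a-b})` when `a ≥ b ≥ 0`, and `0` otherwise. -/
noncomputable def qbinom (q : ℂ) (a b : ℤ) : ℂ :=
  if 0 ≤ b ∧ b ≤ a then
    qPoch q q a.toNat / (qPoch q q b.toNat * qPoch q q (a - b).toNat)
  else 0

/-- `G(m,n) = (3m² + m)/2 + 2mn + n²`. -/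
def Ggg (m n : ℕ) : ℕ := (3 * m ^ 2 + m) / 2 + 2 * m * n + n ^ 2

lemma qPoch_ne (Q : ℂ) (h : ‖Q‖ < 1) (k : ℕ) : qPoch Q Q k ≠ 0 := by
  rw [qPoch]
  apply Finset.prod_ne_zero_iff.2
  intro j _ hz
  have h1 : (1:ℂ) = Q * Q ^ j := by linear_combination hz
  have h2 : ‖Q * Q ^ j‖ < 1 := by
    rw [norm_mul, norm_pow]
    calc ‖Q‖ * ‖Q‖ ^ j ≤ ‖Q‖ * 1 :=
          mul_le_mul_of_nonneg_left (pow_le_one₀ (norm_nonneg Q) h.le) (norm_nonneg Q)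
      _ < 1 := by simpa using h
  rw [← h1] at h2; simp at h2

lemma qbinom_zero {Q : ℂ} {a b : ℤ} (h : ¬ (0 ≤ b ∧ b ≤ a)) : qbinom Q a b = 0 := by
  rw [qbinom, if_neg h]

lemma qbinom_zero' {Q : ℂ} {a b : ℤ} (h : a < b) : qbinom Q a b = 0 := by
  apply qbinom_zero; omega

lemma qbinom_zero'' {Q : ℂ} {a b : ℤ} (h : b < 0) : qbinom Q a b = 0 := by
  apply qbinom_zero; omega

lemma qPoch_succ (Q : ℂ) (n : ℕ) : qPoch Q Q (n+1) = qPoch Q Q n * (1 - Q^(n+1)) := by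
  rw [qPoch, Finset.prod_range_succ, ← qPoch, pow_succ']

section
variable {Q : ℂ} (hP : ∀ k, qPoch Q Q k ≠ 0)
include hP

lemma pascal_nat (C D : ℕ) (B : ℕ) (hB : B = C+1) :
    qPoch Q Q (B+D+1) / (qPoch Q Q B * qPoch Q Q (D+1)) =
    qPoch Q Q (B+D) / (qPoch Q Q B * qPoch Q Q D) +
      Q^(D+1) * (qPoch Q Q (B+D) / (qPoch Q Q C * qPoch Q Q (D+1))) := by
  subst hB
  rw [show C+1+D+1 = (C+1+D)+1 from rfl, qPoch_succ, qPoch_succ Q D, qPoch_succ Q C]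
  have h1 := hP C; have h2 := hP D; have h3 := hP (C+1+D)
  have h4 := hP (C+1); have h5 := hP (D+1)
  rw [qPoch_succ] at h4 h5
  have hc : (1:ℂ) - Q^(C+1) ≠ 0 := by
    intro h; apply h4; rw [h, mul_zero]
  have hd : (1:ℂ) - Q^(D+1) ≠ 0 := by
    intro h; apply h5; rw [h, mul_zero]
  field_simp
  ring_nf
end

section
variable {Q : ℂ} (hP : ∀ k, qPoch Q Q k ≠ 0)
include hP

lemma pascal_nat' (C D : ℕ) (B : ℕ) (hB : B = C+1) :
    qPoch Q Q (B+D+1) / (qPoch Q Q B * qPoch Q Q (D+1)) =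
    Q^B * (qPoch Q Q (B+D) / (qPoch Q Q B * qPoch Q Q D)) +
      qPoch Q Q (B+D) / (qPoch Q Q C * qPoch Q Q (D+1)) := by
  subst hB
  rw [show C+1+D+1 = (C+1+D)+1 from rfl, qPoch_succ, qPoch_succ Q D, qPoch_succ Q C]
  have h1 := hP C; have h2 := hP D; have h3 := hP (C+1+D)
  have h4 := hP (C+1); have h5 := hP (D+1)
  rw [qPoch_succ] at h4 h5
  have hc : (1:ℂ) - Q^(C+1) ≠ 0 := fun h => h4 (by rw [h, mul_zero])
  have hd : (1:ℂ) - Q^(D+1) ≠ 0 := fun h => h5 (by rw [h, mul_zero])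
  field_simp
  ring_nf

lemma qbinom_eq_one {a : ℤ} (ha : 0 ≤ a) : qbinom Q a a = 1 := by
  rw [qbinom, if_pos ⟨ha, le_refl a⟩, sub_self]
  simp [qPoch]
  exact (by simpa [qPoch] using hP a.toNat)

lemma qbinom_zero_right {a : ℤ} (ha : 0 ≤ a) : qbinom Q a 0 = 1 := by
  rw [qbinom, if_pos ⟨le_refl 0, ha⟩]
  simp [qPoch]
  exact (by simpa [qPoch] using hP a.toNat)

/-- Pascal I: `[a+1, b] = [a, b] + Q^(a+1-b) [a, b-1]` for `a ≥ 0`. -/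
lemma pascal₁ (a b : ℤ) (ha : 0 ≤ a) :
    qbinom Q (a+1) b = qbinom Q a b + Q ^ (a+1-b) * qbinom Q a (b-1) := by
  rcases lt_or_ge b 0 with hb | hb
  · rw [qbinom, if_neg (by omega), qbinom, if_neg (by omega), qbinom, if_neg (by omega)]
    ring
  rcases eq_or_lt_of_le hb with hb0 | hb1
  · -- b = 0
    rw [← hb0, qbinom_zero_right hP (by omega), qbinom_zero_right hP ha,
      qbinom, if_neg (by omega)]
    ring
  rcases lt_trichotomy b (a+1) with hba | hba | hba
  · -- 1 ≤ b ≤ a : main case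
    obtain ⟨A, rfl⟩ := Int.eq_ofNat_of_zero_le ha
    obtain ⟨B, rfl⟩ := Int.eq_ofNat_of_zero_le hb
    have hBA : B ≤ A := by exact_mod_cast (by omega : (B:ℤ) ≤ A)
    have hB1 : 1 ≤ B := by exact_mod_cast (by omega : (1:ℤ) ≤ B)
    rw [qbinom, if_pos (by constructor <;> omega), qbinom, if_pos (by constructor <;> omega),
      qbinom, if_pos (by constructor <;> omega)]
    have e1 : ((A:ℤ)+1).toNat = (B + (A-B)) + 1 := by omega
    have e2 : ((B:ℤ)).toNat = B := by omega
    have e3 : ((A:ℤ)+1-B).toNat = (A-B)+1 := by omega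
    have e4 : ((A:ℤ)).toNat = B + (A-B) := by omega
    have e5 : ((A:ℤ)-B).toNat = A-B := by omega
    have e6 : ((B:ℤ)-1).toNat = B-1 := by omega
    have e7 : ((A:ℤ)-(B-1)).toNat = (A-B)+1 := by omega
    rw [e1, e2, e3, e4, e5, e6, e7]
    have ez : Q ^ ((A:ℤ)+1-B) = Q ^ ((A-B)+1) := by
      rw [show ((A:ℤ)+1-B) = (((A-B)+1 : ℕ) : ℤ) by omega, zpow_natCast]
    rw [ez]
    exact pascal_nat hP (B-1) (A-B) B (by omega)
  · -- b = a+1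
    rw [hba, qbinom_eq_one hP (by omega), qbinom, if_neg (by omega),
      show a+1-(a+1) = (0:ℤ) from by ring, zpow_zero,
      show a+1-1 = a from by ring, qbinom_eq_one hP ha]
    ring
  · rw [qbinom, if_neg (by omega), qbinom, if_neg (by omega), qbinom, if_neg (by omega)]
    ring

/-- Pascal II: `[a+1, b] = Q^b [a, b] + [a, b-1]` for `a ≥ 0`. -/
lemma pascal₁' (a b : ℤ) (ha : 0 ≤ a) :
    qbinom Q (a+1) b = Q ^ b * qbinom Q a b + qbinom Q a (b-1) := by
  rcases lt_or_ge b 0 with hb | hb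
  · rw [qbinom, if_neg (by omega), qbinom, if_neg (by omega), qbinom, if_neg (by omega)]
    ring
  rcases eq_or_lt_of_le hb with hb0 | hb1
  · rw [← hb0, qbinom_zero_right hP (by omega), qbinom_zero_right hP ha,
      qbinom, if_neg (by omega)]
    simp
  rcases lt_trichotomy b (a+1) with hba | hba | hba
  · obtain ⟨A, rfl⟩ := Int.eq_ofNat_of_zero_le ha
    obtain ⟨B, rfl⟩ := Int.eq_ofNat_of_zero_le hb
    have hBA : B ≤ A := by exact_mod_cast (by omega : (B:ℤ) ≤ A)
    have hB1 : 1 ≤ B := by exact_mod_cast (by omega : (1:ℤ) ≤ B)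
    rw [qbinom, if_pos (by constructor <;> omega), qbinom, if_pos (by constructor <;> omega),
      qbinom, if_pos (by constructor <;> omega)]
    have e1 : ((A:ℤ)+1).toNat = (B + (A-B)) + 1 := by omega
    have e2 : ((B:ℤ)).toNat = B := by omega
    have e3 : ((A:ℤ)+1-B).toNat = (A-B)+1 := by omega
    have e4 : ((A:ℤ)).toNat = B + (A-B) := by omega
    have e5 : ((A:ℤ)-B).toNat = A-B := by omega
    have e6 : ((B:ℤ)-1).toNat = B-1 := by omega
    have e7 : ((A:ℤ)-(B-1)).toNat = (A-B)+1 := by omega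
    rw [e1, e2, e3, e4, e5, e6, e7]
    have ez : Q ^ ((B:ℤ)) = Q ^ B := zpow_natCast Q B
    rw [ez]
    exact pascal_nat' hP (B-1) (A-B) B (by omega)
  · rw [hba, qbinom_eq_one hP (by omega), qbinom, if_neg (by omega),
      show a+1-1 = a from by ring, qbinom_eq_one hP ha]
    ring
  · rw [qbinom, if_neg (by omega), qbinom, if_neg (by omega), qbinom, if_neg (by omega)]
    ring

/-- Double Pascal: `[a+2,b] = [a,b] + (Q^(a+1-b)+Q^(a+2-b)) [a,b-1] + Q^(2a+4-2b) [a,b-2]`. -/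
lemma pascal₂ (hQ0 : Q ≠ 0) (a b : ℤ) (ha : 0 ≤ a) :
    qbinom Q (a+2) b = qbinom Q a b + (Q ^ (a+1-b) + Q ^ (a+2-b)) * qbinom Q a (b-1)
      + Q ^ (2*a+4-2*b) * qbinom Q a (b-2) := by
  have h1 : qbinom Q (a+2) b = qbinom Q (a+1) b + Q ^ (a+2-b) * qbinom Q (a+1) (b-1) := by
    have := pascal₁ hP (a+1) b (by omega)
    rw [show a+1+1 = a+2 from by ring] at this
    exact this
  rw [h1, pascal₁ hP a b ha, pascal₁ hP a (b-1) ha]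
  rw [show a+1-(b-1) = a+2-b from by ring, show (b-1)-1 = b-2 from by ring]
  have hz : Q ^ (a+2-b) * (Q ^ (a+2-b) * qbinom Q a (b-2)) = Q ^ (2*a+4-2*b) * qbinom Q a (b-2) := by
    rw [← mul_assoc, ← zpow_add₀ hQ0, show a+2-b + (a+2-b) = 2*a+4-2*b from by ring]
  rw [mul_add, hz]
  ring
end

lemma Ggg_stepn (a x : ℕ) : Ggg a (x+2) = Ggg a x + (4*a + 4*x + 4) := by
  unfold Ggg
  generalize (3 * a ^ 2 + a) / 2 = D
  ring

lemma Ggg_stepm1 (a x : ℕ) : Ggg (a+1) x = Ggg a x + (3*a + 2 + 2*x) := by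
  unfold Ggg
  rw [show 3*(a+1)^2 + (a+1) = 3*a^2+a + 2*(3*a+2) from by ring,
    Nat.add_mul_div_left _ _ (by norm_num : 0 < 2)]
  ring

lemma Ggg_stepm2 (a x : ℕ) : Ggg (a+2) x = Ggg a x + (6*a + 7 + 4*x) := by
  rw [show a+2 = (a+1)+1 from rfl, Ggg_stepm1, Ggg_stepm1]
  ring

-- shift helpers
lemma sum_shift1 (f : ℕ → ℂ) (R : ℕ) (h0 : f 0 = 0) (hR : f R = 0) :
    ∑ a ∈ range R, f (a + 1) = ∑ a ∈ range R, f a := by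
  have h1 := Finset.sum_range_succ' f R
  rw [Finset.sum_range_succ f R] at h1
  linear_combination -h1 + hR - h0

lemma sum_shift2 (f : ℕ → ℂ) (R : ℕ) (h0 : f 0 = 0) (h1 : f 1 = 0)
    (hR : f R = 0) (hR1 : f (R+1) = 0) :
    ∑ a ∈ range R, f (a + 2) = ∑ a ∈ range R, f a := by
  have e1 : ∑ a ∈ range R, f (a + 2) = ∑ a ∈ range R, f (a+1) :=
    sum_shift1 (fun a => f (a+1)) R h1 hR1
  rw [e1, sum_shift1 f R h0 hR]

lemma sum_even_odd (f : ℕ → ℂ) (K : ℕ) :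
    ∑ i ∈ range (2*K), f i = ∑ j ∈ range K, f (2*j) + ∑ j ∈ range K, f (2*j+1) := by
  induction K with
  | zero => simp
  | succ k ih =>
      rw [show 2*(k+1) = (2*k+1)+1 from by ring, Finset.sum_range_succ, Finset.sum_range_succ,
        Finset.sum_range_succ (fun j => f (2*j)), Finset.sum_range_succ (fun j => f (2*j+1)), ih]
      ring

lemma ext2 (f : ℕ → ℕ → ℂ) (R R' : ℕ) (hR : R ≤ R')
    (hv : ∀ a j, R ≤ a ∨ R ≤ j → f a j = 0) :
    ∑ a ∈ range R, ∑ j ∈ range R, f a j = ∑ a ∈ range R', ∑ j ∈ range R', f a j := by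
  have inner : ∀ a, ∑ j ∈ range R, f a j = ∑ j ∈ range R', f a j := by
    intro a
    apply Finset.sum_subset (Finset.range_subset_range.2 hR)
    intro j _ hj
    exact hv a j (Or.inr (by simpa using hj))
  rw [Finset.sum_congr rfl (fun a _ => inner a)]
  apply Finset.sum_subset (Finset.range_subset_range.2 hR)
  intro a _ ha
  rw [Finset.sum_eq_zero]
  intro j _
  exact hv a j (Or.inl (by simpa using ha))

-- the two families
noncomputable def fterm (q : ℂ) (ε n a j : ℕ) : ℂ :=
  q ^ (Ggg a (2*j+ε)) * qbinom q (2*(n:ℤ)+2-2*(a:ℤ)-4*(j:ℤ)-2*(ε:ℤ)) a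
    * qbinom (q^4) ((n:ℤ)+1-a-j-ε) j

noncomputable def FF (q : ℂ) (ε n : ℕ) : ℂ :=
  ∑ a ∈ range (n+2), ∑ j ∈ range (n+2), fterm q ε n a j

noncomputable def bterm (q : ℂ) (N m n : ℕ) : ℂ :=
  q ^ (m^2 + n^2) * qbinom (q^2) ((N:ℤ) - m + 1) n * qbinom (q^2) (n:ℤ) m

noncomputable def BB (q : ℂ) (N : ℕ) : ℂ :=
  ∑ m ∈ range (N+2), ∑ n ∈ range (N+2), bterm q N m n

lemma fterm_vanish (q : ℂ) (ε n a j : ℕ) (h : (n:ℤ)+1 < a + 2*j + ε) :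
    fterm q ε n a j = 0 := by
  unfold fterm
  rw [qbinom_zero (Q := q^4) (by push_cast; omega), mul_zero]

lemma bterm_vanish (q : ℂ) (N m n : ℕ) (h : N+2 ≤ m ∨ N+2 ≤ n) :
    bterm q N m n = 0 := by
  unfold bterm
  rcases le_or_gt ((n:ℤ)) ((N:ℤ) - m + 1) with h1 | h1
  · rw [qbinom_zero' (Q := q^2) (a := (n:ℤ)) (by omega), mul_zero]
  · rw [qbinom_zero' (Q := q^2) h1, mul_zero, zero_mul]

lemma FF_eq (q : ℂ) (ε n R : ℕ) (hR : n+2 ≤ R) :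
    FF q ε n = ∑ a ∈ range R, ∑ j ∈ range R, fterm q ε n a j := by
  unfold FF
  exact ext2 _ _ _ hR (fun a j h => fterm_vanish q ε n a j (by push_cast; omega))

lemma BB_eq (q : ℂ) (N R : ℕ) (hR : N+2 ≤ R) :
    BB q N = ∑ m ∈ range R, ∑ n ∈ range R, bterm q N m n := by
  unfold BB
  exact ext2 _ _ _ hR (fun m n h => bterm_vanish q N m n (by omega))

-- auxiliary term families for the LHS recurrence
noncomputable def Xt (q : ℂ) (ε n a j : ℕ) : ℂ :=
  q ^ Ggg a (2*j+ε) * qbinom q (2*(n:ℤ)+8-2*(a:ℤ)-4*(j:ℤ)-2*(ε:ℤ)) a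
    * qbinom (q^4) ((n:ℤ)+3-a-j-ε) j

noncomputable def Yt (q : ℂ) (ε n a j : ℕ) : ℂ :=
  q ^ Ggg a (2*j+ε) * (q^4:ℂ) ^ ((n:ℤ)+4-a-2*(j:ℤ)-ε)
    * qbinom q (2*(n:ℤ)+8-2*(a:ℤ)-4*(j:ℤ)-2*(ε:ℤ)) a
    * qbinom (q^4) ((n:ℤ)+3-a-j-ε) ((j:ℤ)-1)

noncomputable def X1t (q : ℂ) (ε n a j : ℕ) : ℂ :=
  q ^ Ggg a (2*j+ε) * (q ^ (2*(n:ℤ)+7-3*(a:ℤ)-4*(j:ℤ)-2*(ε:ℤ)) + q ^ (2*(n:ℤ)+8-3*(a:ℤ)-4*(j:ℤ)-2*(ε:ℤ)))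
    * qbinom q (2*(n:ℤ)+6-2*(a:ℤ)-4*(j:ℤ)-2*(ε:ℤ)) ((a:ℤ)-1)
    * qbinom (q^4) ((n:ℤ)+3-a-j-ε) j

noncomputable def X2t (q : ℂ) (ε n a j : ℕ) : ℂ :=
  q ^ Ggg a (2*j+ε) * q ^ (4*(n:ℤ)+16-6*(a:ℤ)-8*(j:ℤ)-4*(ε:ℤ))
    * qbinom q (2*(n:ℤ)+6-2*(a:ℤ)-4*(j:ℤ)-2*(ε:ℤ)) ((a:ℤ)-2)
    * qbinom (q^4) ((n:ℤ)+3-a-j-ε) j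

section
variable {q : ℂ} {ε n : ℕ}

lemma split1 (hε : ε ≤ 1) (hP4 : ∀ k, qPoch (q^4) (q^4) k ≠ 0) (a j : ℕ) :
    fterm q ε (n+3) a j = Xt q ε n a j + Yt q ε n a j := by
  unfold fterm Xt Yt
  rw [show 2*((n+3:ℕ):ℤ)+2-2*(a:ℤ)-4*(j:ℤ)-2*(ε:ℤ) = 2*(n:ℤ)+8-2*(a:ℤ)-4*(j:ℤ)-2*(ε:ℤ)
      from by push_cast; ring,
    show ((n+3:ℕ):ℤ)+1-(a:ℤ)-(j:ℤ)-(ε:ℤ) = ((n:ℤ)+3-a-j-ε)+1 from by push_cast; ring]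
  by_cases h : 0 ≤ (n:ℤ)+3-(a:ℤ)-(j:ℤ)-(ε:ℤ)
  · rw [pascal₁ hP4 _ j h,
      show (n:ℤ)+3-(a:ℤ)-(j:ℤ)-(ε:ℤ)+1-(j:ℤ) = (n:ℤ)+4-a-2*(j:ℤ)-ε from by ring]
    ring
  · rcases le_or_gt ((a:ℤ)+2*(j:ℤ)+(ε:ℤ)) ((n:ℤ)+4) with h2 | h2
    · rw [qbinom_zero' (Q := q) (a := 2*(n:ℤ)+8-2*(a:ℤ)-4*(j:ℤ)-2*(ε:ℤ)) (b := (a:ℤ))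
        (by omega)]
      ring
    · rw [qbinom_zero (Q := q^4) (a := ((n:ℤ)+3-a-j-ε)+1) (b := (j:ℤ)) (by omega),
        qbinom_zero (Q := q^4) (a := ((n:ℤ)+3-a-j-ε)) (b := (j:ℤ)) (by omega),
        qbinom_zero (Q := q^4) (a := ((n:ℤ)+3-a-j-ε)) (b := (j:ℤ)-1) (by omega)]
      ring

lemma split2 (hq0 : q ≠ 0) (hP1 : ∀ k, qPoch q q k ≠ 0) (a j : ℕ) :
    Xt q ε n a j = fterm q ε (n+2) a j + X1t q ε n a j + X2t q ε n a j := by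
  unfold fterm Xt X1t X2t
  rw [show 2*((n+2:ℕ):ℤ)+2-2*(a:ℤ)-4*(j:ℤ)-2*(ε:ℤ) = 2*(n:ℤ)+6-2*(a:ℤ)-4*(j:ℤ)-2*(ε:ℤ)
      from by push_cast; ring,
    show ((n+2:ℕ):ℤ)+1-(a:ℤ)-(j:ℤ)-(ε:ℤ) = (n:ℤ)+3-a-j-ε from by push_cast; ring,
    show 2*(n:ℤ)+8-2*(a:ℤ)-4*(j:ℤ)-2*(ε:ℤ) = (2*(n:ℤ)+6-2*(a:ℤ)-4*(j:ℤ)-2*(ε:ℤ))+2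
      from by ring]
  by_cases h : 0 ≤ 2*(n:ℤ)+6-2*(a:ℤ)-4*(j:ℤ)-2*(ε:ℤ)
  · rw [pascal₂ hP1 hq0 _ a h,
      show 2*(n:ℤ)+6-2*(a:ℤ)-4*(j:ℤ)-2*(ε:ℤ)+1-(a:ℤ) = 2*(n:ℤ)+7-3*(a:ℤ)-4*(j:ℤ)-2*(ε:ℤ)
        from by ring,
      show 2*(n:ℤ)+6-2*(a:ℤ)-4*(j:ℤ)-2*(ε:ℤ)+2-(a:ℤ) = 2*(n:ℤ)+8-3*(a:ℤ)-4*(j:ℤ)-2*(ε:ℤ)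
        from by ring,
      show 2*(2*(n:ℤ)+6-2*(a:ℤ)-4*(j:ℤ)-2*(ε:ℤ))+4-2*(a:ℤ) = 4*(n:ℤ)+16-6*(a:ℤ)-8*(j:ℤ)-4*(ε:ℤ)
        from by ring]
    ring
  · rw [qbinom_zero (Q := q^4) (a := (n:ℤ)+3-a-j-ε) (b := (j:ℤ)) (by omega)]
    ring
end

section
variable {q : ℂ} {ε n : ℕ}

lemma Yshift (hq0 : q ≠ 0) (a j : ℕ) :
    Yt q ε n a (j+1) = q^(4*n+12) * fterm q ε (n+1) a j := by
  unfold Yt fterm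
  rw [show 2*(j+1)+ε = (2*j+ε)+2 from by ring, Ggg_stepn,
    show 2*((n+1:ℕ):ℤ)+2-2*(a:ℤ)-4*(j:ℤ)-2*(ε:ℤ) = 2*(n:ℤ)+4-2*(a:ℤ)-4*(j:ℤ)-2*(ε:ℤ)
      from by push_cast; ring,
    show 2*(n:ℤ)+8-2*(a:ℤ)-4*((j+1:ℕ):ℤ)-2*(ε:ℤ) = 2*(n:ℤ)+4-2*(a:ℤ)-4*(j:ℤ)-2*(ε:ℤ)
      from by push_cast; ring,
    show ((n+1:ℕ):ℤ)+1-(a:ℤ)-(j:ℤ)-(ε:ℤ) = (n:ℤ)+2-a-j-ε from by push_cast; ring,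
    show (n:ℤ)+3-(a:ℤ)-((j+1:ℕ):ℤ)-(ε:ℤ) = (n:ℤ)+2-a-j-ε from by push_cast; ring,
    show (((j+1:ℕ)):ℤ)-1 = (j:ℤ) from by push_cast; ring,
    show (n:ℤ)+4-(a:ℤ)-2*((j+1:ℕ):ℤ)-(ε:ℤ) = (n:ℤ)+2-a-2*(j:ℤ)-ε from by push_cast; ring]
  have hs : q ^ (Ggg a (2*j+ε) + (4*a+4*(2*j+ε)+4)) * (q^4:ℂ) ^ ((n:ℤ)+2-a-2*(j:ℤ)-ε)
      = q^(4*n+12) * q ^ (Ggg a (2*j+ε)) := by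
    rw [show (q^4:ℂ) = q^((4:ℕ):ℤ) from by rw [zpow_natCast], ← zpow_mul,
      ← zpow_natCast q (Ggg a (2*j+ε) + (4*a+4*(2*j+ε)+4)),
      ← zpow_natCast q (4*n+12), ← zpow_natCast q (Ggg a (2*j+ε)),
      ← zpow_add₀ hq0, ← zpow_add₀ hq0]
    congr 1
    push_cast
    ring
  linear_combination (qbinom q (2*(n:ℤ)+4-2*(a:ℤ)-4*(j:ℤ)-2*(ε:ℤ)) (a:ℤ)
    * qbinom (q^4) ((n:ℤ)+2-(a:ℤ)-(j:ℤ)-(ε:ℤ)) (j:ℤ)) * hs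

lemma Yzero0 : Yt q ε n a 0 = 0 := by
  unfold Yt
  rw [qbinom_zero'' (Q := q^4) (show (((0:ℕ)):ℤ)-1 < 0 from by norm_num)]
  ring

lemma YzeroR (a j : ℕ) (h : n+5 ≤ j) : Yt q ε n a j = 0 := by
  unfold Yt
  rw [qbinom_zero (Q := q^4) (a := (n:ℤ)+3-a-j-ε) (b := (j:ℤ)-1) (by omega)]
  ring

lemma X1shift (hq0 : q ≠ 0) (a j : ℕ) :
    X1t q ε n (a+1) j = (q^(2*n+6)+q^(2*n+7)) * fterm q ε (n+1) a j := by
  unfold X1t fterm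
  rw [Ggg_stepm1,
    show 2*((n+1:ℕ):ℤ)+2-2*(a:ℤ)-4*(j:ℤ)-2*(ε:ℤ) = 2*(n:ℤ)+4-2*(a:ℤ)-4*(j:ℤ)-2*(ε:ℤ)
      from by push_cast; ring,
    show 2*(n:ℤ)+6-2*((a+1:ℕ):ℤ)-4*(j:ℤ)-2*(ε:ℤ) = 2*(n:ℤ)+4-2*(a:ℤ)-4*(j:ℤ)-2*(ε:ℤ)
      from by push_cast; ring,
    show ((n+1:ℕ):ℤ)+1-(a:ℤ)-(j:ℤ)-(ε:ℤ) = (n:ℤ)+2-a-j-ε from by push_cast; ring,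
    show (n:ℤ)+3-((a+1:ℕ):ℤ)-(j:ℤ)-(ε:ℤ) = (n:ℤ)+2-a-j-ε from by push_cast; ring,
    show (((a+1:ℕ)):ℤ)-1 = (a:ℤ) from by push_cast; ring,
    show 2*(n:ℤ)+7-3*((a+1:ℕ):ℤ)-4*(j:ℤ)-2*(ε:ℤ) = 2*(n:ℤ)+4-3*(a:ℤ)-4*(j:ℤ)-2*(ε:ℤ)
      from by push_cast; ring,
    show 2*(n:ℤ)+8-3*((a+1:ℕ):ℤ)-4*(j:ℤ)-2*(ε:ℤ) = 2*(n:ℤ)+5-3*(a:ℤ)-4*(j:ℤ)-2*(ε:ℤ)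
      from by push_cast; ring]
  have hs1 : q ^ (Ggg a (2*j+ε) + (3*a+2+2*(2*j+ε))) * q ^ (2*(n:ℤ)+4-3*(a:ℤ)-4*(j:ℤ)-2*(ε:ℤ))
      = q^(2*n+6) * q ^ (Ggg a (2*j+ε)) := by
    rw [← zpow_natCast q (Ggg a (2*j+ε) + (3*a+2+2*(2*j+ε))),
      ← zpow_natCast q (2*n+6), ← zpow_natCast q (Ggg a (2*j+ε)),
      ← zpow_add₀ hq0, ← zpow_add₀ hq0]
    congr 1
    push_cast
    ring
  have hs2 : q ^ (Ggg a (2*j+ε) + (3*a+2+2*(2*j+ε))) * q ^ (2*(n:ℤ)+5-3*(a:ℤ)-4*(j:ℤ)-2*(ε:ℤ))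
      = q^(2*n+7) * q ^ (Ggg a (2*j+ε)) := by
    rw [← zpow_natCast q (Ggg a (2*j+ε) + (3*a+2+2*(2*j+ε))),
      ← zpow_natCast q (2*n+7), ← zpow_natCast q (Ggg a (2*j+ε)),
      ← zpow_add₀ hq0, ← zpow_add₀ hq0]
    congr 1
    push_cast
    ring
  linear_combination (qbinom q (2*(n:ℤ)+4-2*(a:ℤ)-4*(j:ℤ)-2*(ε:ℤ)) (a:ℤ)
    * qbinom (q^4) ((n:ℤ)+2-(a:ℤ)-(j:ℤ)-(ε:ℤ)) (j:ℤ)) * (hs1 + hs2)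

lemma X1zero0 (j : ℕ) : X1t q ε n 0 j = 0 := by
  unfold X1t
  rw [qbinom_zero'' (Q := q) (show (((0:ℕ)):ℤ)-1 < 0 from by norm_num)]
  ring

lemma X1vanish (a j : ℕ) (h : n+4 ≤ a) : X1t q ε n a j = 0 := by
  unfold X1t
  rw [qbinom_zero (Q := q) (a := 2*(n:ℤ)+6-2*(a:ℤ)-4*(j:ℤ)-2*(ε:ℤ)) (b := (a:ℤ)-1) (by omega)]
  ring

lemma X2shift (hq0 : q ≠ 0) (a j : ℕ) :
    X2t q ε n (a+2) j = q^(4*n+11) * fterm q ε n a j := by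
  unfold X2t fterm
  rw [Ggg_stepm2,
    show 2*((n:ℕ):ℤ)+2-2*(a:ℤ)-4*(j:ℤ)-2*(ε:ℤ) = 2*(n:ℤ)+2-2*(a:ℤ)-4*(j:ℤ)-2*(ε:ℤ)
      from by push_cast; ring,
    show 2*(n:ℤ)+6-2*((a+2:ℕ):ℤ)-4*(j:ℤ)-2*(ε:ℤ) = 2*(n:ℤ)+2-2*(a:ℤ)-4*(j:ℤ)-2*(ε:ℤ)
      from by push_cast; ring,
    show ((n:ℕ):ℤ)+1-(a:ℤ)-(j:ℤ)-(ε:ℤ) = (n:ℤ)+1-a-j-ε from by push_cast; ring,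
    show (n:ℤ)+3-((a+2:ℕ):ℤ)-(j:ℤ)-(ε:ℤ) = (n:ℤ)+1-a-j-ε from by push_cast; ring,
    show (((a+2:ℕ)):ℤ)-2 = (a:ℤ) from by push_cast; ring,
    show 4*(n:ℤ)+16-6*((a+2:ℕ):ℤ)-8*(j:ℤ)-4*(ε:ℤ) = 4*(n:ℤ)+4-6*(a:ℤ)-8*(j:ℤ)-4*(ε:ℤ)
      from by push_cast; ring]
  have hs : q ^ (Ggg a (2*j+ε) + (6*a+7+4*(2*j+ε))) * q ^ (4*(n:ℤ)+4-6*(a:ℤ)-8*(j:ℤ)-4*(ε:ℤ))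
      = q^(4*n+11) * q ^ (Ggg a (2*j+ε)) := by
    rw [← zpow_natCast q (Ggg a (2*j+ε) + (6*a+7+4*(2*j+ε))),
      ← zpow_natCast q (4*n+11), ← zpow_natCast q (Ggg a (2*j+ε)),
      ← zpow_add₀ hq0, ← zpow_add₀ hq0]
    congr 1
    push_cast
    ring
  linear_combination (qbinom q (2*(n:ℤ)+2-2*(a:ℤ)-4*(j:ℤ)-2*(ε:ℤ)) (a:ℤ)
    * qbinom (q^4) ((n:ℤ)+1-(a:ℤ)-(j:ℤ)-(ε:ℤ)) (j:ℤ)) * hs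

lemma X2zero0 (j : ℕ) : X2t q ε n 0 j = 0 := by
  unfold X2t
  rw [qbinom_zero'' (Q := q) (show (((0:ℕ)):ℤ)-2 < 0 from by norm_num)]
  ring

lemma X2zero1 (j : ℕ) : X2t q ε n 1 j = 0 := by
  unfold X2t
  rw [qbinom_zero'' (Q := q) (show (((1:ℕ)):ℤ)-2 < 0 from by norm_num)]
  ring

lemma X2vanish (a j : ℕ) (h : n+4 ≤ a) : X2t q ε n a j = 0 := by
  unfold X2t
  rw [qbinom_zero (Q := q) (a := 2*(n:ℤ)+6-2*(a:ℤ)-4*(j:ℤ)-2*(ε:ℤ)) (b := (a:ℤ)-2) (by omega)]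
  ring
end

lemma Frec (q : ℂ) (hq : ‖q‖ < 1) (hq0 : q ≠ 0) (ε : ℕ) (hε : ε ≤ 1) (n : ℕ) :
    FF q ε (n+3) = FF q ε (n+2) + (q^(2*n+6)+q^(2*n+7)+q^(4*n+12)) * FF q ε (n+1)
      + q^(4*n+11) * FF q ε n := by
  have hq4 : ‖(q^4:ℂ)‖ < 1 := by
    rw [norm_pow]; exact pow_lt_one₀ (norm_nonneg q) hq (by norm_num)
  have hP1 := qPoch_ne q hq
  have hP4 := qPoch_ne (q^4) hq4
  set R := n+9 with hRdef
  have hY : ∑ a ∈ range R, ∑ j ∈ range R, Yt q ε n a j = q^(4*n+12) * FF q ε (n+1) := by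
    have inner : ∀ a ∈ range R, ∑ j ∈ range R, Yt q ε n a j
        = ∑ j ∈ range R, q^(4*n+12) * fterm q ε (n+1) a j := by
      intro a _
      rw [← sum_shift1 (fun j => Yt q ε n a j) R Yzero0 (YzeroR a R (by omega))]
      exact Finset.sum_congr rfl fun j _ => Yshift hq0 a j
    rw [Finset.sum_congr rfl inner]
    simp only [← Finset.mul_sum]
    rw [← FF_eq q ε (n+1) R (by omega)]
  have hX1 : ∑ a ∈ range R, ∑ j ∈ range R, X1t q ε n a j
      = (q^(2*n+6)+q^(2*n+7)) * FF q ε (n+1) := by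
    rw [← sum_shift1 (fun a => ∑ j ∈ range R, X1t q ε n a j) R
      (Finset.sum_eq_zero fun j _ => X1zero0 j)
      (Finset.sum_eq_zero fun j _ => X1vanish R j (by omega))]
    rw [Finset.sum_congr rfl (fun a _ => Finset.sum_congr rfl fun j _ => X1shift hq0 a j)]
    simp only [← Finset.mul_sum]
    rw [← FF_eq q ε (n+1) R (by omega)]
  have hX2 : ∑ a ∈ range R, ∑ j ∈ range R, X2t q ε n a j = q^(4*n+11) * FF q ε n := by
    rw [← sum_shift2 (fun a => ∑ j ∈ range R, X2t q ε n a j) R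
      (Finset.sum_eq_zero fun j _ => X2zero0 j)
      (Finset.sum_eq_zero fun j _ => X2zero1 j)
      (Finset.sum_eq_zero fun j _ => X2vanish R j (by omega))
      (Finset.sum_eq_zero fun j _ => X2vanish (R+1) j (by omega))]
    rw [Finset.sum_congr rfl (fun a _ => Finset.sum_congr rfl fun j _ => X2shift hq0 a j)]
    simp only [← Finset.mul_sum]
    rw [← FF_eq q ε n R (by omega)]
  have hsplit : FF q ε (n+3)
      = (∑ a ∈ range R, ∑ j ∈ range R, (fterm q ε (n+2) a j + X1t q ε n a j + X2t q ε n a j))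
        + ∑ a ∈ range R, ∑ j ∈ range R, Yt q ε n a j := by
    rw [FF_eq q ε (n+3) R (by omega),
      Finset.sum_congr rfl (fun a _ => Finset.sum_congr rfl fun j _ => split1 hε hP4 a j)]
    simp only [Finset.sum_add_distrib]
    congr 1
    rw [Finset.sum_congr rfl (fun a _ => Finset.sum_congr rfl fun j _ => split2 hq0 hP1 a j)]
    simp only [Finset.sum_add_distrib]
  rw [hsplit]
  simp only [Finset.sum_add_distrib]
  rw [hY, hX1, hX2, ← FF_eq q ε (n+2) R (by omega)]
  ring

noncomputable def Ct (q : ℂ) (n m k : ℕ) : ℂ :=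
  q ^ (m^2+k^2) * (q^2:ℂ) ^ ((n:ℤ)+3-m-k) * qbinom (q^2) ((n:ℤ)+2-m) ((k:ℤ)-1)
    * qbinom (q^2) (k:ℤ) m

noncomputable def D2t (q : ℂ) (n m k : ℕ) : ℂ :=
  q ^ (m^2+(k+1)^2) * (q^2:ℂ) ^ ((n:ℤ)+2-m-k) * qbinom (q^2) ((n:ℤ)+2-m) (k:ℤ)
    * qbinom (q^2) (k:ℤ) ((m:ℤ)-1)

section
variable {q : ℂ} {n : ℕ}

lemma bsplit1 (hP2 : ∀ k, qPoch (q^2) (q^2) k ≠ 0) (m k : ℕ) :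
    bterm q (n+2) m k = bterm q (n+1) m k + Ct q n m k := by
  unfold bterm Ct
  rw [show ((n+2:ℕ):ℤ)-(m:ℤ)+1 = ((n:ℤ)+2-m)+1 from by push_cast; ring,
    show ((n+1:ℕ):ℤ)-(m:ℤ)+1 = (n:ℤ)+2-m from by push_cast; ring]
  by_cases h : 0 ≤ (n:ℤ)+2-(m:ℤ)
  · rw [pascal₁ hP2 _ k h,
      show (n:ℤ)+2-(m:ℤ)+1-(k:ℤ) = (n:ℤ)+3-m-k from by ring]
    ring
  · rcases le_or_gt ((k:ℤ)) ((n:ℤ)+3-m) with h2 | h2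
    · rw [qbinom_zero' (Q := q^2) (a := (k:ℤ)) (b := (m:ℤ)) (by omega)]
      ring
    · rw [qbinom_zero (Q := q^2) (a := ((n:ℤ)+2-m)+1) (b := (k:ℤ)) (by omega),
        qbinom_zero (Q := q^2) (a := (n:ℤ)+2-m) (b := (k:ℤ)) (by omega),
        qbinom_zero (Q := q^2) (a := (n:ℤ)+2-m) (b := (k:ℤ)-1) (by omega)]
      ring

lemma Ctzero0 (m : ℕ) : Ct q n m 0 = 0 := by
  unfold Ct
  rw [qbinom_zero'' (Q := q^2) (show (((0:ℕ)):ℤ)-1 < 0 from by norm_num)]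
  ring

lemma CtvanishR (m k : ℕ) (h : n+4 ≤ k) : Ct q n m k = 0 := by
  unfold Ct
  rw [qbinom_zero (Q := q^2) (a := (n:ℤ)+2-m) (b := (k:ℤ)-1) (by omega)]
  ring

lemma bsplit2 (hq0 : q ≠ 0) (hP2 : ∀ k, qPoch (q^2) (q^2) k ≠ 0) (m k : ℕ) :
    Ct q n m (k+1) = q^(2*n+5) * bterm q (n+1) m k + D2t q n m k := by
  unfold Ct bterm D2t
  rw [show (((k+1:ℕ)):ℤ)-1 = (k:ℤ) from by push_cast; ring,
    show (n:ℤ)+3-(m:ℤ)-((k+1:ℕ):ℤ) = (n:ℤ)+2-m-k from by push_cast; ring,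
    show ((n+1:ℕ):ℤ)-(m:ℤ)+1 = (n:ℤ)+2-m from by push_cast; ring,
    show (((k+1:ℕ)):ℤ) = (k:ℤ)+1 from by push_cast; ring,
    pascal₁' hP2 (k:ℤ) (m:ℤ) (by positivity)]
  have hs : q ^ (m^2+(k+1)^2) * (q^2:ℂ) ^ ((n:ℤ)+2-m-k) * (q^2:ℂ) ^ ((m:ℤ))
      = q^(2*n+5) * q ^ (m^2+k^2) := by
    rw [show (q^2:ℂ) = q^((2:ℕ):ℤ) from by rw [zpow_natCast], ← zpow_mul, ← zpow_mul,
      ← zpow_natCast q (m^2+(k+1)^2), ← zpow_natCast q (2*n+5), ← zpow_natCast q (m^2+k^2),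
      ← zpow_add₀ hq0, ← zpow_add₀ hq0, ← zpow_add₀ hq0]
    congr 1
    push_cast
    ring
  linear_combination (qbinom (q^2) ((n:ℤ)+2-(m:ℤ)) (k:ℤ) * qbinom (q^2) (k:ℤ) (m:ℤ)) * hs

lemma D2zero0 (k : ℕ) : D2t q n 0 k = 0 := by
  unfold D2t
  rw [qbinom_zero'' (Q := q^2) (show (((0:ℕ)):ℤ)-1 < 0 from by norm_num)]
  ring

lemma D2vanish (m k : ℕ) (h : n+3 ≤ m) : D2t q n m k = 0 := by
  unfold D2t
  rw [qbinom_zero (Q := q^2) (a := (n:ℤ)+2-m) (b := (k:ℤ)) (by omega)]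
  ring

lemma D2shift (hq0 : q ≠ 0) (m k : ℕ) :
    D2t q n (m+1) k = q^(2*n+4) * bterm q n m k := by
  unfold D2t bterm
  rw [show (((m+1:ℕ)):ℤ)-1 = (m:ℤ) from by push_cast; ring,
    show (n:ℤ)+2-((m+1:ℕ):ℤ) = (n:ℤ)+1-m from by push_cast; ring,
    show ((n:ℕ):ℤ)-(m:ℤ)+1 = (n:ℤ)+1-m from by push_cast; ring]
  have hs : q ^ ((m+1)^2+(k+1)^2) * (q^2:ℂ) ^ ((n:ℤ)+1-m-k)
      = q^(2*n+4) * q ^ (m^2+k^2) := by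
    rw [show (q^2:ℂ) = q^((2:ℕ):ℤ) from by rw [zpow_natCast], ← zpow_mul,
      ← zpow_natCast q ((m+1)^2+(k+1)^2), ← zpow_natCast q (2*n+4), ← zpow_natCast q (m^2+k^2),
      ← zpow_add₀ hq0, ← zpow_add₀ hq0]
    congr 1
    push_cast
    ring
  linear_combination (qbinom (q^2) ((n:ℤ)+1-(m:ℤ)) (k:ℤ) * qbinom (q^2) (k:ℤ) (m:ℤ)) * hs
end

lemma Brec2 (q : ℂ) (hq : ‖q‖ < 1) (hq0 : q ≠ 0) (n : ℕ) :
    BB q (n+2) = (1+q^(2*n+5)) * BB q (n+1) + q^(2*n+4) * BB q n := by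
  have hq2 : ‖(q^2:ℂ)‖ < 1 := by
    rw [norm_pow]; exact pow_lt_one₀ (norm_nonneg q) hq (by norm_num)
  have hP2 := qPoch_ne (q^2) hq2
  set R := n+9 with hRdef
  have hC : ∑ m ∈ range R, ∑ k ∈ range R, Ct q n m k
      = q^(2*n+5) * BB q (n+1) + q^(2*n+4) * BB q n := by
    have inner : ∀ m ∈ range R, ∑ k ∈ range R, Ct q n m k
        = ∑ k ∈ range R, (q^(2*n+5) * bterm q (n+1) m k + D2t q n m k) := by
      intro m _
      rw [← sum_shift1 (fun k => Ct q n m k) R (Ctzero0 m) (CtvanishR m R (by omega))]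
      exact Finset.sum_congr rfl fun k _ => bsplit2 hq0 hP2 m k
    rw [Finset.sum_congr rfl inner]
    simp only [Finset.sum_add_distrib]
    congr 1
    · simp only [← Finset.mul_sum]
      rw [← BB_eq q (n+1) R (by omega)]
    · rw [← sum_shift1 (fun m => ∑ k ∈ range R, D2t q n m k) R
        (Finset.sum_eq_zero fun k _ => D2zero0 k)
        (Finset.sum_eq_zero fun k _ => D2vanish R k (by omega))]
      rw [Finset.sum_congr rfl (fun m _ => Finset.sum_congr rfl fun k _ => D2shift hq0 m k)]
      simp only [← Finset.mul_sum]
      rw [← BB_eq q n R (by omega)]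
  rw [BB_eq q (n+2) R (by omega),
    Finset.sum_congr rfl (fun m _ => Finset.sum_congr rfl fun k _ => bsplit1 hP2 m k)]
  simp only [Finset.sum_add_distrib]
  rw [hC, ← BB_eq q (n+1) R (by omega)]
  ring

lemma Brec3 (q : ℂ) (hq : ‖q‖ < 1) (hq0 : q ≠ 0) (n : ℕ) :
    BB q (n+3) = BB q (n+2) + (q^(2*n+6)+q^(2*n+7)+q^(4*n+12)) * BB q (n+1)
      + q^(4*n+11) * BB q n := by
  have h1 := Brec2 q hq hq0 (n+1)
  have h2 := Brec2 q hq hq0 n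
  rw [show (n+1)+2 = n+3 from by ring, show (n+1)+1 = n+2 from by ring,
    show 2*(n+1)+5 = 2*n+7 from by ring, show 2*(n+1)+4 = 2*n+6 from by ring] at h1
  linear_combination h1 + q^(2*n+7) * h2

-- interface: the theorem's LHS tsum equals FF q 0 N + FF q 1 N
lemma LHS_interface (q : ℂ) (N : ℕ) :
    ∑' p : ℕ × ℕ, q ^ (Ggg p.1 p.2)
        * qbinom q (2 * (N : ℤ) - 2 * p.1 - 2 * p.2 + 2) p.1
        * qbinom (q ^ 4) ((N : ℤ) - p.1 - p.2 + 1 + (p.2 / 2 : ℕ)) ((p.2 / 2 : ℕ) : ℤ)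
      = FF q 0 N + FF q 1 N := by
  set f : ℕ × ℕ → ℂ := fun p => q ^ (Ggg p.1 p.2)
        * qbinom q (2 * (N : ℤ) - 2 * p.1 - 2 * p.2 + 2) p.1
        * qbinom (q ^ 4) ((N : ℤ) - p.1 - p.2 + 1 + (p.2 / 2 : ℕ)) ((p.2 / 2 : ℕ) : ℤ)
    with hf
  have hvan : ∀ p : ℕ × ℕ, N + 2 ≤ p.1 + p.2 → f p = 0 := by
    intro p hp
    rw [hf]
    simp only
    rw [qbinom_zero (Q := q^4)
      (a := (N : ℤ) - p.1 - p.2 + 1 + (p.2 / 2 : ℕ)) (b := ((p.2 / 2 : ℕ) : ℤ))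
      (by
        intro hcon
        obtain ⟨h1, h2⟩ := hcon
        omega)]
    ring
  have h1 : ∑' p : ℕ × ℕ, f p = ∑ p ∈ (range (2*(N+2))) ×ˢ (range (2*(N+2))), f p := by
    apply tsum_eq_sum
    intro p hp
    rw [Finset.mem_product] at hp
    apply hvan
    simp only [Finset.mem_range] at hp
    omega
  rw [h1, Finset.sum_product]
  have h2 : ∀ m : ℕ, ∑ nn ∈ range (2*(N+2)), f (m, nn)
      = ∑ j ∈ range (N+2), fterm q 0 N m j + ∑ j ∈ range (N+2), fterm q 1 N m j := by
    intro m
    rw [sum_even_odd (fun nn => f (m, nn)) (N+2)]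
    congr 1
    · apply Finset.sum_congr rfl
      intro j _
      rw [hf]
      simp only
      unfold fterm
      rw [show (2*j)/2 = j from by omega, show 2*j+0 = 2*j from by ring,
        show 2 * (N : ℤ) - 2*(m:ℤ) - 2*((2*j:ℕ):ℤ) + 2
          = 2*(N:ℤ)+2-2*(m:ℤ)-4*(j:ℤ)-2*((0:ℕ):ℤ) from by push_cast; ring,
        show (N : ℤ) - (m:ℤ) - ((2*j:ℕ):ℤ) + 1 + ((j:ℕ):ℤ)
          = (N:ℤ)+1-(m:ℤ)-(j:ℤ)-((0:ℕ):ℤ) from by push_cast; ring]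
    · apply Finset.sum_congr rfl
      intro j _
      rw [hf]
      simp only
      unfold fterm
      rw [show (2*j+1)/2 = j from by omega,
        show 2 * (N : ℤ) - 2*(m:ℤ) - 2*((2*j+1:ℕ):ℤ) + 2
          = 2*(N:ℤ)+2-2*(m:ℤ)-4*(j:ℤ)-2*((1:ℕ):ℤ) from by push_cast; ring,
        show (N : ℤ) - (m:ℤ) - ((2*j+1:ℕ):ℤ) + 1 + ((j:ℕ):ℤ)
          = (N:ℤ)+1-(m:ℤ)-(j:ℤ)-((1:ℕ):ℤ) from by push_cast; ring]
  rw [Finset.sum_congr rfl (fun m _ => h2 m), Finset.sum_add_distrib]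
  have h3 : ∀ ε : ℕ, ε ≤ 1 → ∑ m ∈ range (2*(N+2)), ∑ j ∈ range (N+2), fterm q ε N m j
      = FF q ε N := by
    intro ε hε
    rw [FF_eq q ε N (2*(N+2)) (by omega)]
    apply Finset.sum_congr rfl
    intro m _
    apply Finset.sum_subset (Finset.range_subset_range.2 (by omega))
    intro j _ hj
    simp only [Finset.mem_range] at hj
    exact fterm_vanish q ε N m j (by push_cast; omega)
  rw [h3 0 (by norm_num), h3 1 (by norm_num)]

lemma RHS_interface (q : ℂ) (N : ℕ) :
    ∑' p : ℕ × ℕ, q ^ (p.1 ^ 2 + p.2 ^ 2)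
          * qbinom (q ^ 2) ((N : ℤ) - p.1 + 1) p.2
          * qbinom (q ^ 2) p.2 p.1
      = BB q N := by
  have h1 : ∑' p : ℕ × ℕ, q ^ (p.1 ^ 2 + p.2 ^ 2)
          * qbinom (q ^ 2) ((N : ℤ) - p.1 + 1) p.2 * qbinom (q ^ 2) p.2 p.1
      = ∑ p ∈ (range (N+2)) ×ˢ (range (N+2)),
          q ^ (p.1 ^ 2 + p.2 ^ 2) * qbinom (q ^ 2) ((N : ℤ) - p.1 + 1) p.2
            * qbinom (q ^ 2) p.2 p.1 := by
    apply tsum_eq_sum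
    intro p hp
    rw [Finset.mem_product] at hp
    have := bterm_vanish q N p.1 p.2 (by
      simp only [Finset.mem_range] at hp
      omega)
    unfold bterm at this
    exact this
  rw [h1, Finset.sum_product, BB]
  rfl
lemma qbinom_eval {Q : ℂ} (hP : ∀ k, qPoch Q Q k ≠ 0) (t b : ℤ) (T B : ℕ)
    (hT : t = T) (hB : b = B) (hb : B ≤ T) (v : ℂ)
    (hv : qPoch Q Q T = v * (qPoch Q Q B * qPoch Q Q (T-B))) :
    qbinom Q t b = v := by
  subst hT hB
  rw [qbinom, if_pos ⟨by positivity, by exact_mod_cast hb⟩]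
  rw [show ((T:ℤ)).toNat = T from by omega, show ((B:ℤ)).toNat = B from by omega,
    show ((T:ℤ)-(B:ℤ)).toNat = T-B from by omega, hv, mul_div_assoc,
    div_self (mul_ne_zero (hP B) (hP (T-B))), mul_one]

lemma base0 (q : ℂ) (hq : ‖q‖ < 1) : FF q 0 0 + FF q 1 0 = BB q 0 := by
  have hq2 : ‖(q^2:ℂ)‖ < 1 := by
    rw [norm_pow]; exact pow_lt_one₀ (norm_nonneg q) hq (by norm_num)
  have hq4 : ‖(q^4:ℂ)‖ < 1 := by
    rw [norm_pow]; exact pow_lt_one₀ (norm_nonneg q) hq (by norm_num)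
  have hP1 := qPoch_ne q hq
  have hP2 := qPoch_ne (q^2) hq2
  have hP4 := qPoch_ne (q^4) hq4
  have E0_0 : qbinom q (-6:ℤ) (1:ℤ) = 0 := qbinom_zero (by norm_num)
  have E0_1 : qbinom q (-4:ℤ) (0:ℤ) = 0 := qbinom_zero (by norm_num)
  have E0_2 : qbinom q (-4:ℤ) (1:ℤ) = 0 := qbinom_zero (by norm_num)
  have E0_3 : qbinom q (-2:ℤ) (0:ℤ) = 0 := qbinom_zero (by norm_num)
  have E0_4 : qbinom q (-2:ℤ) (1:ℤ) = 0 := qbinom_zero (by norm_num)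
  have E0_5 : qbinom q (0:ℤ) (0:ℤ) = (1) := qbinom_eval hP1 0 0 0 0 (by norm_num) (by norm_num) (by norm_num) _ (by simp [qPoch, Finset.prod_range_succ]; try ring)
  have E0_6 : qbinom q (0:ℤ) (1:ℤ) = 0 := qbinom_zero (by norm_num)
  have E0_7 : qbinom q (2:ℤ) (0:ℤ) = (1) := qbinom_eval hP1 2 0 2 0 (by norm_num) (by norm_num) (by norm_num) _ (by simp [qPoch, Finset.prod_range_succ]; try ring)
  have E0_8 : qbinom (q^2) (0:ℤ) (0:ℤ) = (1) := qbinom_eval hP2 0 0 0 0 (by norm_num) (by norm_num) (by norm_num) _ (by simp [qPoch, Finset.prod_range_succ]; try ring)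
  have E0_9 : qbinom (q^2) (0:ℤ) (1:ℤ) = 0 := qbinom_zero (by norm_num)
  have E0_10 : qbinom (q^2) (1:ℤ) (0:ℤ) = (1) := qbinom_eval hP2 1 0 1 0 (by norm_num) (by norm_num) (by norm_num) _ (by simp [qPoch, Finset.prod_range_succ]; try ring)
  have E0_11 : qbinom (q^2) (1:ℤ) (1:ℤ) = (1) := qbinom_eval hP2 1 1 1 1 (by norm_num) (by norm_num) (by norm_num) _ (by simp [qPoch, Finset.prod_range_succ]; try ring)
  have E0_12 : qbinom (q^4) (-2:ℤ) (1:ℤ) = 0 := qbinom_zero (by norm_num)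
  have E0_13 : qbinom (q^4) (-1:ℤ) (0:ℤ) = 0 := qbinom_zero (by norm_num)
  have E0_14 : qbinom (q^4) (-1:ℤ) (1:ℤ) = 0 := qbinom_zero (by norm_num)
  have E0_15 : qbinom (q^4) (0:ℤ) (0:ℤ) = (1) := qbinom_eval hP4 0 0 0 0 (by norm_num) (by norm_num) (by norm_num) _ (by simp [qPoch, Finset.prod_range_succ]; try ring)
  have E0_16 : qbinom (q^4) (0:ℤ) (1:ℤ) = 0 := qbinom_zero (by norm_num)
  have E0_17 : qbinom (q^4) (1:ℤ) (0:ℤ) = (1) := qbinom_eval hP4 1 0 1 0 (by norm_num) (by norm_num) (by norm_num) _ (by simp [qPoch, Finset.prod_range_succ]; try ring)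
  simp only [FF, BB, fterm, bterm, Finset.sum_range_succ, Finset.sum_range_zero]
  norm_num [Ggg]
  simp only [E0_0, E0_1, E0_2, E0_3, E0_4, E0_5, E0_6, E0_7, E0_8, E0_9, E0_10, E0_11, E0_12, E0_13, E0_14, E0_15, E0_16, E0_17]
  ring

lemma base1 (q : ℂ) (hq : ‖q‖ < 1) : FF q 0 1 + FF q 1 1 = BB q 1 := by
  have hq2 : ‖(q^2:ℂ)‖ < 1 := by
    rw [norm_pow]; exact pow_lt_one₀ (norm_nonneg q) hq (by norm_num)
  have hq4 : ‖(q^4:ℂ)‖ < 1 := by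
    rw [norm_pow]; exact pow_lt_one₀ (norm_nonneg q) hq (by norm_num)
  have hP1 := qPoch_ne q hq
  have hP2 := qPoch_ne (q^2) hq2
  have hP4 := qPoch_ne (q^4) hq4
  have E1_0 : qbinom q (-10:ℤ) (2:ℤ) = 0 := qbinom_zero (by norm_num)
  have E1_1 : qbinom q (-8:ℤ) (1:ℤ) = 0 := qbinom_zero (by norm_num)
  have E1_2 : qbinom q (-8:ℤ) (2:ℤ) = 0 := qbinom_zero (by norm_num)
  have E1_3 : qbinom q (-6:ℤ) (0:ℤ) = 0 := qbinom_zero (by norm_num)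
  have E1_4 : qbinom q (-6:ℤ) (1:ℤ) = 0 := qbinom_zero (by norm_num)
  have E1_5 : qbinom q (-6:ℤ) (2:ℤ) = 0 := qbinom_zero (by norm_num)
  have E1_6 : qbinom q (-4:ℤ) (0:ℤ) = 0 := qbinom_zero (by norm_num)
  have E1_7 : qbinom q (-4:ℤ) (1:ℤ) = 0 := qbinom_zero (by norm_num)
  have E1_8 : qbinom q (-4:ℤ) (2:ℤ) = 0 := qbinom_zero (by norm_num)
  have E1_9 : qbinom q (-2:ℤ) (0:ℤ) = 0 := qbinom_zero (by norm_num)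
  have E1_10 : qbinom q (-2:ℤ) (1:ℤ) = 0 := qbinom_zero (by norm_num)
  have E1_11 : qbinom q (-2:ℤ) (2:ℤ) = 0 := qbinom_zero (by norm_num)
  have E1_12 : qbinom q (0:ℤ) (0:ℤ) = (1) := qbinom_eval hP1 0 0 0 0 (by norm_num) (by norm_num) (by norm_num) _ (by simp [qPoch, Finset.prod_range_succ]; try ring)
  have E1_13 : qbinom q (0:ℤ) (1:ℤ) = 0 := qbinom_zero (by norm_num)
  have E1_14 : qbinom q (0:ℤ) (2:ℤ) = 0 := qbinom_zero (by norm_num)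
  have E1_15 : qbinom q (2:ℤ) (0:ℤ) = (1) := qbinom_eval hP1 2 0 2 0 (by norm_num) (by norm_num) (by norm_num) _ (by simp [qPoch, Finset.prod_range_succ]; try ring)
  have E1_16 : qbinom q (2:ℤ) (1:ℤ) = (1 + q) := qbinom_eval hP1 2 1 2 1 (by norm_num) (by norm_num) (by norm_num) _ (by simp [qPoch, Finset.prod_range_succ]; try ring)
  have E1_17 : qbinom q (4:ℤ) (0:ℤ) = (1) := qbinom_eval hP1 4 0 4 0 (by norm_num) (by norm_num) (by norm_num) _ (by simp [qPoch, Finset.prod_range_succ]; try ring)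
  have E1_18 : qbinom (q^2) (0:ℤ) (0:ℤ) = (1) := qbinom_eval hP2 0 0 0 0 (by norm_num) (by norm_num) (by norm_num) _ (by simp [qPoch, Finset.prod_range_succ]; try ring)
  have E1_19 : qbinom (q^2) (0:ℤ) (1:ℤ) = 0 := qbinom_zero (by norm_num)
  have E1_20 : qbinom (q^2) (0:ℤ) (2:ℤ) = 0 := qbinom_zero (by norm_num)
  have E1_21 : qbinom (q^2) (1:ℤ) (0:ℤ) = (1) := qbinom_eval hP2 1 0 1 0 (by norm_num) (by norm_num) (by norm_num) _ (by simp [qPoch, Finset.prod_range_succ]; try ring)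
  have E1_22 : qbinom (q^2) (1:ℤ) (1:ℤ) = (1) := qbinom_eval hP2 1 1 1 1 (by norm_num) (by norm_num) (by norm_num) _ (by simp [qPoch, Finset.prod_range_succ]; try ring)
  have E1_23 : qbinom (q^2) (1:ℤ) (2:ℤ) = 0 := qbinom_zero (by norm_num)
  have E1_24 : qbinom (q^2) (2:ℤ) (0:ℤ) = (1) := qbinom_eval hP2 2 0 2 0 (by norm_num) (by norm_num) (by norm_num) _ (by simp [qPoch, Finset.prod_range_succ]; try ring)
  have E1_25 : qbinom (q^2) (2:ℤ) (1:ℤ) = (1 + q^2) := qbinom_eval hP2 2 1 2 1 (by norm_num) (by norm_num) (by norm_num) _ (by simp [qPoch, Finset.prod_range_succ]; try ring)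
  have E1_26 : qbinom (q^2) (2:ℤ) (2:ℤ) = (1) := qbinom_eval hP2 2 2 2 2 (by norm_num) (by norm_num) (by norm_num) _ (by simp [qPoch, Finset.prod_range_succ]; try ring)
  have E1_27 : qbinom (q^4) (-3:ℤ) (2:ℤ) = 0 := qbinom_zero (by norm_num)
  have E1_28 : qbinom (q^4) (-2:ℤ) (1:ℤ) = 0 := qbinom_zero (by norm_num)
  have E1_29 : qbinom (q^4) (-2:ℤ) (2:ℤ) = 0 := qbinom_zero (by norm_num)
  have E1_30 : qbinom (q^4) (-1:ℤ) (0:ℤ) = 0 := qbinom_zero (by norm_num)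
  have E1_31 : qbinom (q^4) (-1:ℤ) (1:ℤ) = 0 := qbinom_zero (by norm_num)
  have E1_32 : qbinom (q^4) (-1:ℤ) (2:ℤ) = 0 := qbinom_zero (by norm_num)
  have E1_33 : qbinom (q^4) (0:ℤ) (0:ℤ) = (1) := qbinom_eval hP4 0 0 0 0 (by norm_num) (by norm_num) (by norm_num) _ (by simp [qPoch, Finset.prod_range_succ]; try ring)
  have E1_34 : qbinom (q^4) (0:ℤ) (1:ℤ) = 0 := qbinom_zero (by norm_num)
  have E1_35 : qbinom (q^4) (0:ℤ) (2:ℤ) = 0 := qbinom_zero (by norm_num)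
  have E1_36 : qbinom (q^4) (1:ℤ) (0:ℤ) = (1) := qbinom_eval hP4 1 0 1 0 (by norm_num) (by norm_num) (by norm_num) _ (by simp [qPoch, Finset.prod_range_succ]; try ring)
  have E1_37 : qbinom (q^4) (1:ℤ) (1:ℤ) = (1) := qbinom_eval hP4 1 1 1 1 (by norm_num) (by norm_num) (by norm_num) _ (by simp [qPoch, Finset.prod_range_succ]; try ring)
  have E1_38 : qbinom (q^4) (2:ℤ) (0:ℤ) = (1) := qbinom_eval hP4 2 0 2 0 (by norm_num) (by norm_num) (by norm_num) _ (by simp [qPoch, Finset.prod_range_succ]; try ring)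
  simp only [FF, BB, fterm, bterm, Finset.sum_range_succ, Finset.sum_range_zero]
  norm_num [Ggg]
  simp only [E1_0, E1_1, E1_2, E1_3, E1_4, E1_5, E1_6, E1_7, E1_8, E1_9, E1_10, E1_11, E1_12, E1_13, E1_14, E1_15, E1_16, E1_17, E1_18, E1_19, E1_20, E1_21, E1_22, E1_23, E1_24, E1_25, E1_26, E1_27, E1_28, E1_29, E1_30, E1_31, E1_32, E1_33, E1_34, E1_35, E1_36, E1_37, E1_38]
  ring

lemma base2 (q : ℂ) (hq : ‖q‖ < 1) : FF q 0 2 + FF q 1 2 = BB q 2 := by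
  have hq2 : ‖(q^2:ℂ)‖ < 1 := by
    rw [norm_pow]; exact pow_lt_one₀ (norm_nonneg q) hq (by norm_num)
  have hq4 : ‖(q^4:ℂ)‖ < 1 := by
    rw [norm_pow]; exact pow_lt_one₀ (norm_nonneg q) hq (by norm_num)
  have hP1 := qPoch_ne q hq
  have hP2 := qPoch_ne (q^2) hq2
  have hP4 := qPoch_ne (q^4) hq4
  have E2_0 : qbinom q (-14:ℤ) (3:ℤ) = 0 := qbinom_zero (by norm_num)
  have E2_1 : qbinom q (-12:ℤ) (2:ℤ) = 0 := qbinom_zero (by norm_num)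
  have E2_2 : qbinom q (-12:ℤ) (3:ℤ) = 0 := qbinom_zero (by norm_num)
  have E2_3 : qbinom q (-10:ℤ) (1:ℤ) = 0 := qbinom_zero (by norm_num)
  have E2_4 : qbinom q (-10:ℤ) (2:ℤ) = 0 := qbinom_zero (by norm_num)
  have E2_5 : qbinom q (-10:ℤ) (3:ℤ) = 0 := qbinom_zero (by norm_num)
  have E2_6 : qbinom q (-8:ℤ) (0:ℤ) = 0 := qbinom_zero (by norm_num)
  have E2_7 : qbinom q (-8:ℤ) (1:ℤ) = 0 := qbinom_zero (by norm_num)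
  have E2_8 : qbinom q (-8:ℤ) (2:ℤ) = 0 := qbinom_zero (by norm_num)
  have E2_9 : qbinom q (-8:ℤ) (3:ℤ) = 0 := qbinom_zero (by norm_num)
  have E2_10 : qbinom q (-6:ℤ) (0:ℤ) = 0 := qbinom_zero (by norm_num)
  have E2_11 : qbinom q (-6:ℤ) (1:ℤ) = 0 := qbinom_zero (by norm_num)
  have E2_12 : qbinom q (-6:ℤ) (2:ℤ) = 0 := qbinom_zero (by norm_num)
  have E2_13 : qbinom q (-6:ℤ) (3:ℤ) = 0 := qbinom_zero (by norm_num)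
  have E2_14 : qbinom q (-4:ℤ) (0:ℤ) = 0 := qbinom_zero (by norm_num)
  have E2_15 : qbinom q (-4:ℤ) (1:ℤ) = 0 := qbinom_zero (by norm_num)
  have E2_16 : qbinom q (-4:ℤ) (2:ℤ) = 0 := qbinom_zero (by norm_num)
  have E2_17 : qbinom q (-4:ℤ) (3:ℤ) = 0 := qbinom_zero (by norm_num)
  have E2_18 : qbinom q (-2:ℤ) (0:ℤ) = 0 := qbinom_zero (by norm_num)
  have E2_19 : qbinom q (-2:ℤ) (1:ℤ) = 0 := qbinom_zero (by norm_num)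
  have E2_20 : qbinom q (-2:ℤ) (2:ℤ) = 0 := qbinom_zero (by norm_num)
  have E2_21 : qbinom q (-2:ℤ) (3:ℤ) = 0 := qbinom_zero (by norm_num)
  have E2_22 : qbinom q (0:ℤ) (0:ℤ) = (1) := qbinom_eval hP1 0 0 0 0 (by norm_num) (by norm_num) (by norm_num) _ (by simp [qPoch, Finset.prod_range_succ]; try ring)
  have E2_23 : qbinom q (0:ℤ) (1:ℤ) = 0 := qbinom_zero (by norm_num)
  have E2_24 : qbinom q (0:ℤ) (2:ℤ) = 0 := qbinom_zero (by norm_num)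
  have E2_25 : qbinom q (0:ℤ) (3:ℤ) = 0 := qbinom_zero (by norm_num)
  have E2_26 : qbinom q (2:ℤ) (0:ℤ) = (1) := qbinom_eval hP1 2 0 2 0 (by norm_num) (by norm_num) (by norm_num) _ (by simp [qPoch, Finset.prod_range_succ]; try ring)
  have E2_27 : qbinom q (2:ℤ) (1:ℤ) = (1 + q) := qbinom_eval hP1 2 1 2 1 (by norm_num) (by norm_num) (by norm_num) _ (by simp [qPoch, Finset.prod_range_succ]; try ring)
  have E2_28 : qbinom q (2:ℤ) (2:ℤ) = (1) := qbinom_eval hP1 2 2 2 2 (by norm_num) (by norm_num) (by norm_num) _ (by simp [qPoch, Finset.prod_range_succ]; try ring)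
  have E2_29 : qbinom q (4:ℤ) (0:ℤ) = (1) := qbinom_eval hP1 4 0 4 0 (by norm_num) (by norm_num) (by norm_num) _ (by simp [qPoch, Finset.prod_range_succ]; try ring)
  have E2_30 : qbinom q (4:ℤ) (1:ℤ) = (1 + q + q^2 + q^3) := qbinom_eval hP1 4 1 4 1 (by norm_num) (by norm_num) (by norm_num) _ (by simp [qPoch, Finset.prod_range_succ]; try ring)
  have E2_31 : qbinom q (6:ℤ) (0:ℤ) = (1) := qbinom_eval hP1 6 0 6 0 (by norm_num) (by norm_num) (by norm_num) _ (by simp [qPoch, Finset.prod_range_succ]; try ring)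
  have E2_32 : qbinom (q^2) (0:ℤ) (0:ℤ) = (1) := qbinom_eval hP2 0 0 0 0 (by norm_num) (by norm_num) (by norm_num) _ (by simp [qPoch, Finset.prod_range_succ]; try ring)
  have E2_33 : qbinom (q^2) (0:ℤ) (1:ℤ) = 0 := qbinom_zero (by norm_num)
  have E2_34 : qbinom (q^2) (0:ℤ) (2:ℤ) = 0 := qbinom_zero (by norm_num)
  have E2_35 : qbinom (q^2) (0:ℤ) (3:ℤ) = 0 := qbinom_zero (by norm_num)
  have E2_36 : qbinom (q^2) (1:ℤ) (0:ℤ) = (1) := qbinom_eval hP2 1 0 1 0 (by norm_num) (by norm_num) (by norm_num) _ (by simp [qPoch, Finset.prod_range_succ]; try ring)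
  have E2_37 : qbinom (q^2) (1:ℤ) (1:ℤ) = (1) := qbinom_eval hP2 1 1 1 1 (by norm_num) (by norm_num) (by norm_num) _ (by simp [qPoch, Finset.prod_range_succ]; try ring)
  have E2_38 : qbinom (q^2) (1:ℤ) (2:ℤ) = 0 := qbinom_zero (by norm_num)
  have E2_39 : qbinom (q^2) (1:ℤ) (3:ℤ) = 0 := qbinom_zero (by norm_num)
  have E2_40 : qbinom (q^2) (2:ℤ) (0:ℤ) = (1) := qbinom_eval hP2 2 0 2 0 (by norm_num) (by norm_num) (by norm_num) _ (by simp [qPoch, Finset.prod_range_succ]; try ring)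
  have E2_41 : qbinom (q^2) (2:ℤ) (1:ℤ) = (1 + q^2) := qbinom_eval hP2 2 1 2 1 (by norm_num) (by norm_num) (by norm_num) _ (by simp [qPoch, Finset.prod_range_succ]; try ring)
  have E2_42 : qbinom (q^2) (2:ℤ) (2:ℤ) = (1) := qbinom_eval hP2 2 2 2 2 (by norm_num) (by norm_num) (by norm_num) _ (by simp [qPoch, Finset.prod_range_succ]; try ring)
  have E2_43 : qbinom (q^2) (2:ℤ) (3:ℤ) = 0 := qbinom_zero (by norm_num)
  have E2_44 : qbinom (q^2) (3:ℤ) (0:ℤ) = (1) := qbinom_eval hP2 3 0 3 0 (by norm_num) (by norm_num) (by norm_num) _ (by simp [qPoch, Finset.prod_range_succ]; try ring)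
  have E2_45 : qbinom (q^2) (3:ℤ) (1:ℤ) = (1 + q^2 + q^4) := qbinom_eval hP2 3 1 3 1 (by norm_num) (by norm_num) (by norm_num) _ (by simp [qPoch, Finset.prod_range_succ]; try ring)
  have E2_46 : qbinom (q^2) (3:ℤ) (2:ℤ) = (1 + q^2 + q^4) := qbinom_eval hP2 3 2 3 2 (by norm_num) (by norm_num) (by norm_num) _ (by simp [qPoch, Finset.prod_range_succ]; try ring)
  have E2_47 : qbinom (q^2) (3:ℤ) (3:ℤ) = (1) := qbinom_eval hP2 3 3 3 3 (by norm_num) (by norm_num) (by norm_num) _ (by simp [qPoch, Finset.prod_range_succ]; try ring)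
  have E2_48 : qbinom (q^4) (-4:ℤ) (3:ℤ) = 0 := qbinom_zero (by norm_num)
  have E2_49 : qbinom (q^4) (-3:ℤ) (2:ℤ) = 0 := qbinom_zero (by norm_num)
  have E2_50 : qbinom (q^4) (-3:ℤ) (3:ℤ) = 0 := qbinom_zero (by norm_num)
  have E2_51 : qbinom (q^4) (-2:ℤ) (1:ℤ) = 0 := qbinom_zero (by norm_num)
  have E2_52 : qbinom (q^4) (-2:ℤ) (2:ℤ) = 0 := qbinom_zero (by norm_num)
  have E2_53 : qbinom (q^4) (-2:ℤ) (3:ℤ) = 0 := qbinom_zero (by norm_num)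
  have E2_54 : qbinom (q^4) (-1:ℤ) (0:ℤ) = 0 := qbinom_zero (by norm_num)
  have E2_55 : qbinom (q^4) (-1:ℤ) (1:ℤ) = 0 := qbinom_zero (by norm_num)
  have E2_56 : qbinom (q^4) (-1:ℤ) (2:ℤ) = 0 := qbinom_zero (by norm_num)
  have E2_57 : qbinom (q^4) (-1:ℤ) (3:ℤ) = 0 := qbinom_zero (by norm_num)
  have E2_58 : qbinom (q^4) (0:ℤ) (0:ℤ) = (1) := qbinom_eval hP4 0 0 0 0 (by norm_num) (by norm_num) (by norm_num) _ (by simp [qPoch, Finset.prod_range_succ]; try ring)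
  have E2_59 : qbinom (q^4) (0:ℤ) (1:ℤ) = 0 := qbinom_zero (by norm_num)
  have E2_60 : qbinom (q^4) (0:ℤ) (2:ℤ) = 0 := qbinom_zero (by norm_num)
  have E2_61 : qbinom (q^4) (0:ℤ) (3:ℤ) = 0 := qbinom_zero (by norm_num)
  have E2_62 : qbinom (q^4) (1:ℤ) (0:ℤ) = (1) := qbinom_eval hP4 1 0 1 0 (by norm_num) (by norm_num) (by norm_num) _ (by simp [qPoch, Finset.prod_range_succ]; try ring)
  have E2_63 : qbinom (q^4) (1:ℤ) (1:ℤ) = (1) := qbinom_eval hP4 1 1 1 1 (by norm_num) (by norm_num) (by norm_num) _ (by simp [qPoch, Finset.prod_range_succ]; try ring)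
  have E2_64 : qbinom (q^4) (1:ℤ) (2:ℤ) = 0 := qbinom_zero (by norm_num)
  have E2_65 : qbinom (q^4) (2:ℤ) (0:ℤ) = (1) := qbinom_eval hP4 2 0 2 0 (by norm_num) (by norm_num) (by norm_num) _ (by simp [qPoch, Finset.prod_range_succ]; try ring)
  have E2_66 : qbinom (q^4) (2:ℤ) (1:ℤ) = (1 + q^4) := qbinom_eval hP4 2 1 2 1 (by norm_num) (by norm_num) (by norm_num) _ (by simp [qPoch, Finset.prod_range_succ]; try ring)
  have E2_67 : qbinom (q^4) (3:ℤ) (0:ℤ) = (1) := qbinom_eval hP4 3 0 3 0 (by norm_num) (by norm_num) (by norm_num) _ (by simp [qPoch, Finset.prod_range_succ]; try ring)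
  simp only [FF, BB, fterm, bterm, Finset.sum_range_succ, Finset.sum_range_zero]
  norm_num [Ggg]
  simp only [E2_0, E2_1, E2_2, E2_3, E2_4, E2_5, E2_6, E2_7, E2_8, E2_9, E2_10, E2_11, E2_12, E2_13, E2_14, E2_15, E2_16, E2_17, E2_18, E2_19, E2_20, E2_21, E2_22, E2_23, E2_24, E2_25, E2_26, E2_27, E2_28, E2_29, E2_30, E2_31, E2_32, E2_33, E2_34, E2_35, E2_36, E2_37, E2_38, E2_39, E2_40, E2_41, E2_42, E2_43, E2_44, E2_45, E2_46, E2_47, E2_48, E2_49, E2_50, E2_51, E2_52, E2_53, E2_54, E2_55, E2_56, E2_57, E2_58, E2_59, E2_60, E2_61, E2_62, E2_63, E2_64, E2_65, E2_66, E2_67]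
  ring

lemma Ggg_ne_zero (a n : ℕ) (h : a ≠ 0 ∨ n ≠ 0) : Ggg a n ≠ 0 := by
  unfold Ggg
  rcases h with h | h
  · have h4 : 4 ≤ 3 * a^2 + a := by nlinarith [Nat.one_le_iff_ne_zero.2 h]
    have : 2 ≤ (3 * a^2 + a) / 2 := by omega
    omega
  · have : 1 ≤ n^2 := Nat.one_le_iff_ne_zero.2 (pow_ne_zero 2 h)
    omega

lemma qbinom_zero_right' {Q : ℂ} (hP : ∀ k, qPoch Q Q k ≠ 0) {a : ℤ} (ha : 0 ≤ a) :
    qbinom Q a 0 = 1 := by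
  rw [qbinom, if_pos ⟨le_refl 0, ha⟩]
  simp [qPoch]
  exact (by simpa [qPoch] using hP a.toNat)

lemma sq_sum_ne (m n : ℕ) (h : ¬(m = 0 ∧ n = 0)) : m^2 + n^2 ≠ 0 := by
  intro hz
  apply h
  have hm : m^2 = 0 := by omega
  have hn : n^2 = 0 := by omega
  exact ⟨by simpa using hm, by simpa using hn⟩

lemma FF_qzero0 (N : ℕ) : FF 0 0 N = 1 := by
  have hP0 : ∀ k, qPoch 0 0 k ≠ 0 := qPoch_ne 0 (by norm_num)
  have hterm : ∀ a j : ℕ, fterm 0 0 N a j = if a = 0 ∧ j = 0 then 1 else 0 := by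
    intro a j
    by_cases h : a = 0 ∧ j = 0
    · obtain ⟨rfl, rfl⟩ := h
      rw [if_pos ⟨rfl, rfl⟩]
      unfold fterm
      norm_num [Ggg]
      rw [qbinom_zero_right' hP0 (by omega), qbinom_zero_right' hP0 (by omega)]
      norm_num
    · rw [if_neg h]
      unfold fterm
      rw [zero_pow (Ggg_ne_zero a (2*j+0) (by omega))]
      ring
  unfold FF
  rw [Finset.sum_congr rfl (fun a _ => Finset.sum_congr rfl fun j _ => hterm a j)]
  rw [Finset.sum_eq_single_of_mem 0 (Finset.mem_range.2 (by omega))]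
  · rw [Finset.sum_eq_single_of_mem 0 (Finset.mem_range.2 (by omega))]
    · simp
    · intro b _ hb; simp [hb]
  · intro b _ hb
    apply Finset.sum_eq_zero
    intro j _
    simp [hb]

lemma FF_qzero1 (N : ℕ) : FF 0 1 N = 0 := by
  unfold FF
  apply Finset.sum_eq_zero
  intro a _
  apply Finset.sum_eq_zero
  intro j _
  unfold fterm
  rw [zero_pow (Ggg_ne_zero a (2*j+1) (by omega))]
  ring

lemma BB_qzero (N : ℕ) : BB 0 N = 1 := by
  have hP0 : ∀ k, qPoch 0 0 k ≠ 0 := qPoch_ne 0 (by norm_num)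
  have hterm : ∀ m n : ℕ, bterm 0 N m n = if m = 0 ∧ n = 0 then 1 else 0 := by
    intro m n
    by_cases h : m = 0 ∧ n = 0
    · obtain ⟨rfl, rfl⟩ := h
      rw [if_pos ⟨rfl, rfl⟩]
      unfold bterm
      norm_num
      rw [qbinom_zero_right' hP0 (by omega), qbinom_zero_right' hP0 (by omega)]
      norm_num
    · rw [if_neg h]
      unfold bterm
      rw [zero_pow (sq_sum_ne m n h)]
      ring
  unfold BB
  rw [Finset.sum_congr rfl (fun m _ => Finset.sum_congr rfl fun n _ => hterm m n)]
  rw [Finset.sum_eq_single_of_mem 0 (Finset.mem_range.2 (by omega))]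
  · rw [Finset.sum_eq_single_of_mem 0 (Finset.mem_range.2 (by omega))]
    · simp
    · intro b _ hb; simp [hb]
  · intro b _ hb
    apply Finset.sum_eq_zero
    intro j _
    simp [hb]

/-- finite analogue, first Göllnitz–Gordon identity
(Berkovich–McCoy–Orrick comparison). -/
theorem stmt4 (N : ℕ) (q : ℂ) (hq : ‖q‖ < 1) :
    ∑' p : ℕ × ℕ, q ^ (Ggg p.1 p.2)
        * qbinom q (2 * (N : ℤ) - 2 * p.1 - 2 * p.2 + 2) p.1
        * qbinom (q ^ 4) ((N : ℤ) - p.1 - p.2 + 1 + (p.2 / 2 : ℕ)) ((p.2 / 2 : ℕ) : ℤ)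
      = ∑' p : ℕ × ℕ, q ^ (p.1 ^ 2 + p.2 ^ 2)
          * qbinom (q ^ 2) ((N : ℤ) - p.1 + 1) p.2
          * qbinom (q ^ 2) p.2 p.1 := by
  rw [LHS_interface, RHS_interface]
  by_cases hq0 : q = 0
  · subst hq0
    rw [FF_qzero0, FF_qzero1, BB_qzero]
    norm_num
  · induction N using Nat.strong_induction_on with
    | _ M ih =>
      obtain _|_|_|n := M
      · exact base0 q hq
      · exact base1 q hq
      · exact base2 q hq
      · have e0 := Frec q hq hq0 0 (by norm_num) n
        have e1 := Frec q hq hq0 1 (by norm_num) n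
        have eb := Brec3 q hq hq0 n
        have i2 := ih (n+2) (by omega)
        have i1 := ih (n+1) (by omega)
        have i0 := ih n (by omega)
        rw [e0, e1, eb]
        linear_combination i2 + (q^(2*n+6)+q^(2*n+7)+q^(4*n+12)) * i1 + q^(4*n+11) * i0
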